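/- Let μ ≠ 0, ε = ±1, and let g be the metric on ℝ³ with matrix g₁₁ = (ε/μ)(e^{−2μx₃} − 1), g₁₂ = 1, g₁₃ = μx₂, g₃₃ = 1, other independent entries zero. Then the Christoffel symbols of g, defined by Γ^k_{ij} = ½ g^{kl}(∂ᵢg_{jl} + ∂ⱼg_{il} − ∂ₗg_{ij}), are exactly those determined by: ∇_{∂₁}∂₁ = −εμx₂e^{−2μx₃}∂₂ + εe^{−2μx₃}∂₃; ∇_{∂₁}∂₂ = −½μ²x₂∂₂ + ½μ∂₃; ∇_{∂₁}∂₃ = −½μ∂₁ − ½(εe^{−2μx₃} + ε + μ³x₂²)∂₂ + ½μ²x₂∂₃; ∇_{∂₂}∂₃ = ½μ∂₂; and ∇_{∂₂}∂₂ = ∇_{∂₃}∂₃ = 0. -/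

import Mathlib

/-- A point of `ℝ³`. -/
abbrev Pt := Fin 3 → ℝ

/-- Partial derivative `∂ᵢ f` of a scalar function on `ℝ³`. -/
noncomputable def pder (i : Fin 3) (f : Pt → ℝ) (p : Pt) : ℝ :=
  fderiv ℝ f p (Pi.single i 1)

/-- The matrix of the metric `g` at a point `p = (x₁,x₂,x₃)`. -/
noncomputable def gMat (μ ε : ℝ) (p : Pt) : Matrix (Fin 3) (Fin 3) ℝ :=
  ![![(ε/μ) * (Real.exp (-(2*μ*p 2)) - 1), 1, μ * p 1],
    ![1, 0, 0],
    ![μ * p 1, 0, 1]]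

/-- The Christoffel symbols `Γ^k_{ij} = ½ g^{kl}(∂ᵢg_{jl} + ∂ⱼg_{il} − ∂ₗg_{ij})`,
where `(g^{kl})` is the inverse matrix of `(g_{kl})`. -/
noncomputable def Γ (μ ε : ℝ) (k i j : Fin 3) (p : Pt) : ℝ :=
  (1/2) * ∑ l : Fin 3, (gMat μ ε p)⁻¹ k l *
    (pder i (fun q => gMat μ ε q j l) p + pder j (fun q => gMat μ ε q i l) p
      - pder l (fun q => gMat μ ε q i j) p)

/-- The explicit values of the Christoffel symbols (index order `k i j`). -/
noncomputable def Γexp (μ ε : ℝ) (p : Pt) : Fin 3 → Fin 3 → Fin 3 → ℝ :=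
  ![![![0, 0, -(μ/2)],
     ![0, 0, 0],
     ![-(μ/2), 0, 0]],
    ![![-(ε * μ * p 1 * Real.exp (-(2*μ*p 2))), -(μ^2 * p 1 / 2),
        -((ε * Real.exp (-(2*μ*p 2)) + ε + μ^3 * (p 1)^2) / 2)],
     ![-(μ^2 * p 1 / 2), 0, μ/2],
     ![-((ε * Real.exp (-(2*μ*p 2)) + ε + μ^3 * (p 1)^2) / 2), μ/2, 0]],
    ![![ε * Real.exp (-(2*μ*p 2)), μ/2, μ^2 * p 1 / 2],
     ![μ/2, 0, 0],
     ![μ^2 * p 1 / 2, 0, 0]]]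

lemma pder_const (i : Fin 3) (c : ℝ) (p : Pt) : pder i (fun _ => c) p = 0 := by
  simp [pder]

lemma pder_coord (μ : ℝ) (i : Fin 3) (p : Pt) :
    pder i (fun q : Pt => μ * q 1) p = μ * (Pi.single i 1 : Pt) 1 := by
  have h : HasFDerivAt (fun q : Pt => μ * q 1)
      (μ • (ContinuousLinearMap.proj 1 : Pt →L[ℝ] ℝ)) p := by
    simpa using ((ContinuousLinearMap.proj 1 : Pt →L[ℝ] ℝ).hasFDerivAt (x := p)).const_mul μ
  simp [pder, h.fderiv]

lemma pder_exp (μ ε : ℝ) (i : Fin 3) (p : Pt) :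
    pder i (fun q : Pt => (ε/μ) * (Real.exp (-(2*μ*q 2)) - 1)) p
      = (ε/μ) * (Real.exp (-(2*μ*p 2)) * (-(2*μ*((Pi.single i 1 : Pt) 2)))) := by
  have h1 : HasFDerivAt (fun q : Pt => -(2*μ*q 2))
      (-((2*μ) • (ContinuousLinearMap.proj 2 : Pt →L[ℝ] ℝ))) p := by
    have := ((ContinuousLinearMap.proj 2 : Pt →L[ℝ] ℝ).hasFDerivAt (x := p)).const_mul (2*μ)
    exact this.neg
  have h2 := (h1.exp).sub_const 1
  have h3 := h2.const_mul (ε/μ)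
  simp only [pder, h3.fderiv]
  simp [mul_comm, mul_assoc, mul_left_comm]

lemma gInv_eq (μ ε : ℝ) (p : Pt) :
    (gMat μ ε p)⁻¹ =
      ![![0, 1, 0],
        ![1, (μ * p 1)^2 - (ε/μ) * (Real.exp (-(2*μ*p 2)) - 1), -(μ * p 1)],
        ![0, -(μ * p 1), 1]] := by
  apply Matrix.inv_eq_right_inv
  ext i j
  fin_cases i <;> fin_cases j <;>
    (erw [Matrix.mul_apply, Fin.sum_univ_three];
     simp [gMat, Matrix.one_apply, Matrix.vecHead, Matrix.vecTail]; try ring)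

lemma pg00 (μ ε : ℝ) (l : Fin 3) (p : Pt) :
    pder l (fun q => gMat μ ε q 0 0) p
      = (ε/μ) * (Real.exp (-(2*μ*p 2)) * (-(2*μ*((Pi.single l 1 : Pt) 2)))) :=
  pder_exp μ ε l p

lemma pg01 (μ ε : ℝ) (l : Fin 3) (p : Pt) : pder l (fun q => gMat μ ε q 0 1) p = 0 :=
  pder_const l 1 p

lemma pg02 (μ ε : ℝ) (l : Fin 3) (p : Pt) :
    pder l (fun q => gMat μ ε q 0 2) p = μ * (Pi.single l 1 : Pt) 1 :=
  pder_coord μ l p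

lemma pg10 (μ ε : ℝ) (l : Fin 3) (p : Pt) : pder l (fun q => gMat μ ε q 1 0) p = 0 :=
  pder_const l 1 p

lemma pg11 (μ ε : ℝ) (l : Fin 3) (p : Pt) : pder l (fun q => gMat μ ε q 1 1) p = 0 :=
  pder_const l 0 p

lemma pg12 (μ ε : ℝ) (l : Fin 3) (p : Pt) : pder l (fun q => gMat μ ε q 1 2) p = 0 :=
  pder_const l 0 p

lemma pg20 (μ ε : ℝ) (l : Fin 3) (p : Pt) :
    pder l (fun q => gMat μ ε q 2 0) p = μ * (Pi.single l 1 : Pt) 1 :=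
  pder_coord μ l p

lemma pg21 (μ ε : ℝ) (l : Fin 3) (p : Pt) : pder l (fun q => gMat μ ε q 2 1) p = 0 :=
  pder_const l 0 p

lemma pg22 (μ ε : ℝ) (l : Fin 3) (p : Pt) : pder l (fun q => gMat μ ε q 2 2) p = 0 :=
  pder_const l 1 p

/-- The Christoffel symbols of `g` are exactly the listed ones. -/
theorem christoffel_symbols (μ ε : ℝ) (hμ : μ ≠ 0) (hε : ε = 1 ∨ ε = -1) :
    ∀ (p : Pt) (k i j : Fin 3), Γ μ ε k i j p = Γexp μ ε p k i j := by
  intro p k i j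
  fin_cases k <;> fin_cases i <;> fin_cases j <;>
    (simp [Γ, Γexp, Fin.sum_univ_three, gInv_eq, pg00, pg01, pg02, pg10, pg11, pg12,
       pg20, pg21, pg22, Pi.single_apply, Matrix.vecHead, Matrix.vecTail];
     try field_simp;
     try ring)
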